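/- arXiv:1103.5430 — 4 statements merged into one kernel-verified Lean document; each statement's English description precedes it below -/
import Mathlib

section
/- For every nonnegative integer n, every integer m, and every nonnegative integer p, Σ_{k=0}^n k^p H_k^{(m)} = H_n^{(−p)} H_n^{(m)} + H_n^{(m−p)} − (1/(p+1)) Σ_{k=1}^{p+1} C(p+1, k) B⁺_{p−k+1} H_n^{(m−k)}, with the convention 0^0 = 1. -/
/-- Generalized harmonic number `H n m = ∑_{k=1}^n 1/k^m` (order `m : ℤ`), as a rational. -/
def H (n : ℕ) (m : ℤ) : ℚ := ∑ k ∈ Finset.range n, ((k : ℚ) + 1) ^ (-m)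

lemma H_succ (n : ℕ) (m : ℤ) : H (n+1) m = H n m + ((n:ℚ)+1) ^ (-m) :=
  Finset.sum_range_succ _ _

lemma faul (N p : ℕ) :
    (1/((p:ℚ)+1)) * ∑ k ∈ Finset.Icc 1 (p+1),
      ((p+1).choose k : ℚ) * bernoulli' (p+1-k) * ((N:ℚ))^k = H N (-(p:ℤ)) := by
  have h1 : H N (-(p:ℤ)) = ∑ k ∈ Finset.range N, ((k:ℚ)+1)^p := by
    simp [H, zpow_natCast]
  have h2 : ∑ k ∈ Finset.range N, ((k:ℚ)+1)^p = ∑ k ∈ Finset.Ico 1 (N+1), (k:ℚ)^p := by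
    rw [Finset.sum_Ico_eq_sum_range]
    simp only [add_tsub_cancel_right]
    apply Finset.sum_congr rfl
    intro i _
    push_cast; ring
  rw [h1, h2, sum_Ico_pow]
  rw [← Finset.Ico_add_one_right_eq_Icc, Finset.sum_Ico_eq_sum_range]
  have hpp : p + 1 + 1 - 1 = p + 1 := rfl
  rw [hpp, ← Finset.sum_range_reflect]
  rw [Finset.mul_sum]
  apply Finset.sum_congr rfl
  intro i hi
  simp only [Finset.mem_range] at hi
  have h3 : 1 + (p + 1 - 1 - i) = p + 1 - i := by omega
  rw [h3]
  have h4 : (p+1).choose (p+1-i) = (p+1).choose i := Nat.choose_symm (by omega)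
  have h5 : p + 1 - (p + 1 - i) = i := by omega
  rw [h4, h5]
  ring

theorem sum_pow_mul_harmonic (n : ℕ) (m : ℤ) (p : ℕ) :
    ∑ k ∈ Finset.range (n + 1), (k : ℚ) ^ p * H k m
      = H n (-(p : ℤ)) * H n m + H n (m - p)
        - (1 / ((p : ℚ) + 1)) * ∑ k ∈ Finset.Icc 1 (p + 1),
            ((p + 1).choose k : ℚ) * bernoulli' (p + 1 - k) * H n (m - k) := by
  induction n with
  | zero => simp [H]
  | succ n ih =>
    have hx : ((n:ℚ)+1) ≠ 0 := by positivity
    rw [Finset.sum_range_succ, ih, H_succ, H_succ, H_succ]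
    have hsum : ∑ k ∈ Finset.Icc 1 (p + 1),
        ((p + 1).choose k : ℚ) * bernoulli' (p + 1 - k) * H (n+1) (m - k)
        = (∑ k ∈ Finset.Icc 1 (p + 1),
            ((p + 1).choose k : ℚ) * bernoulli' (p + 1 - k) * H n (m - k))
          + ((n:ℚ)+1)^(-m) * ∑ k ∈ Finset.Icc 1 (p + 1),
            ((p + 1).choose k : ℚ) * bernoulli' (p + 1 - k) * ((n:ℚ)+1)^k := by
      rw [Finset.mul_sum, ← Finset.sum_add_distrib]
      apply Finset.sum_congr rfl
      intro k hk
      rw [H_succ]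
      have : ((n:ℚ)+1)^(-(m - (k:ℤ))) = ((n:ℚ)+1)^(-m) * ((n:ℚ)+1)^(k:ℤ) := by
        rw [← zpow_add₀ hx]; ring_nf
      rw [this, zpow_natCast]
      ring
    rw [hsum]
    have hfa := faul (n+1) p
    rw [H_succ] at hfa
    push_cast at hfa
    have hp1 : ((n:ℚ)+1)^(-(-(p:ℤ))) = ((n:ℚ)+1)^p := by
      rw [neg_neg, zpow_natCast]
    have hp2 : ((n:ℚ)+1)^(-(m - (p:ℤ))) = ((n:ℚ)+1)^p * ((n:ℚ)+1)^(-m) := by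
      rw [← zpow_natCast _ p, ← zpow_add₀ hx]; ring_nf
    rw [hp1] at hfa
    rw [hp1, hp2]
    push_cast
    linear_combination (((n:ℚ)+1)^(-m)) * hfa
end

section
/- For every nonnegative integer n, every integer m, and every nonnegative integer p, Σ_{k=0}^n k^p H_{n−k}^{(m)} = H_n^{(−p)} H_n^{(m)} + δ_{p,0} H_n^{(m)} + (1/(p+1)) Σ_{k=1}^{p+1} (−1)^k C(p+1,k) [B⁺_{p−k+1} + (p−k+1) H_n^{(k−p)}] H_n^{(m−k)}, with the convention 0^0 = 1. -/
open Finset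

lemma icc_reflect (p : ℕ) (f : ℕ → ℚ) :
    ∑ k ∈ Icc 1 (p+1), f k = ∑ k ∈ range (p+1), f (1+(p-k)) := by
  rw [← Finset.Ico_add_one_right_eq_Icc, sum_Ico_eq_sum_range, show p + 1 + 1 - 1 = p + 1 from rfl]
  have := sum_range_reflect (fun k => f (1+k)) (p+1)
  simp only [Nat.add_sub_cancel] at this ⊢
  exact this.symm

lemma claimA (p J : ℕ) :
    ∑ k ∈ Icc 1 (p+1), (-1:ℚ)^k * (((p+1).choose k : ℕ) : ℚ) * bernoulli' (p+1-k) * ((J:ℚ)+1)^k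
      = ((p:ℚ)+1) * ((-1:ℚ)^(p+1) * ∑ t ∈ range (J+1), (t:ℚ)^p) := by
  refine (icc_reflect p _).trans ?_
  rw [sum_range_pow, mul_sum, mul_sum]
  apply Finset.sum_congr rfl
  intro r hr
  rw [mem_range] at hr
  have hrp : r ≤ p := by omega
  have h1 : 1 + (p - r) = p + 1 - r := by omega
  have h2 : p + 1 - (p + 1 - r) = r := by omega
  rw [h1, h2, Nat.choose_symm (by omega), bernoulli'_eq_bernoulli]
  have h3 : (-1:ℚ)^(p+1-r) * (-1:ℚ)^r = (-1:ℚ)^(p+1) := by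
    rw [← pow_add]; congr 1; omega
  have h4 : ((p:ℚ)+1) ≠ 0 := by positivity
  field_simp
  rw [← h3]
  push_cast
  ring

lemma claimB (p n : ℕ) (x : ℚ) :
    ∑ k ∈ range (p+1), (-1:ℚ)^k * ((p.choose k : ℕ) : ℚ) * (∑ i ∈ range n, ((i:ℚ)+1)^(p-k)) * x^k
      = ∑ i ∈ range n, (((i:ℚ)+1) - x)^p := by
  have step1 : ∀ i : ℕ, (((i:ℚ)+1) - x)^p
      = ∑ k ∈ range (p+1), (-1:ℚ)^k * ((p.choose k : ℕ) : ℚ) * ((i:ℚ)+1)^(p-k) * x^k := by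
    intro i
    rw [show ((i:ℚ)+1) - x = (-x) + ((i:ℚ)+1) by ring, add_pow]
    refine sum_congr rfl fun k _ => ?_
    rw [neg_pow]
    ring
  calc ∑ k ∈ range (p+1), (-1:ℚ)^k * ((p.choose k:ℕ):ℚ) * (∑ i ∈ range n, ((i:ℚ)+1)^(p-k)) * x^k
      = ∑ k ∈ range (p+1), ∑ i ∈ range n,
          (-1:ℚ)^k * ((p.choose k:ℕ):ℚ) * ((i:ℚ)+1)^(p-k) * x^k := by
        refine sum_congr rfl fun k _ => ?_
        rw [Finset.mul_sum, Finset.sum_mul]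
    _ = ∑ i ∈ range n, ∑ k ∈ range (p+1),
          (-1:ℚ)^k * ((p.choose k:ℕ):ℚ) * ((i:ℚ)+1)^(p-k) * x^k := Finset.sum_comm
    _ = ∑ i ∈ range n, (((i:ℚ)+1) - x)^p := by
        refine sum_congr rfl fun i _ => (step1 i).symm

lemma claimC (p n j : ℕ) (hj : j < n) :
    ∑ i ∈ range n, (((i:ℚ)+1) - ((j:ℚ)+1))^p
      = (∑ k ∈ range (n - j), (k:ℚ)^p) - (if p = 0 then 1 else 0)
        + (-1:ℚ)^p * ∑ t ∈ range (j+1), (t:ℚ)^p := by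
  rw [← sum_range_add_sum_Ico (fun i => (((i:ℚ)+1) - ((j:ℚ)+1))^p) (show j+1 ≤ n by omega)]
  have hA : ∑ i ∈ range (j+1), (((i:ℚ)+1) - ((j:ℚ)+1))^p
      = (-1:ℚ)^p * ∑ t ∈ range (j+1), (t:ℚ)^p := by
    have hre := sum_range_reflect (fun t => ((t:ℕ):ℚ)^p) (j+1)
    rw [← hre, Finset.mul_sum]
    refine sum_congr rfl fun i hi => ?_
    rw [mem_range] at hi
    have hij : i ≤ j := by omega
    rw [show j + 1 - 1 - i = j - i by omega, Nat.cast_sub hij, ← neg_pow]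
    congr 1
    ring
  have hB : ∑ i ∈ Ico (j+1) n, (((i:ℚ)+1) - ((j:ℚ)+1))^p
      = (∑ k ∈ range (n - j), (k:ℚ)^p) - (if p = 0 then 1 else 0) := by
    rw [sum_Ico_eq_sum_range, show n - j = n - (j+1) + 1 by omega, sum_range_succ']
    rw [Nat.cast_zero, zero_pow_eq]
    have : ∀ t : ℕ, (((j+1+t : ℕ):ℚ)+1 - ((j:ℚ)+1))^p = (((t+1 : ℕ)):ℚ)^p := by
      intro t; congr 1; push_cast; ring
    rw [Finset.sum_congr rfl fun t _ => this t]
    ring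
  rw [hA, hB]
  ring

lemma choose_cast (p k : ℕ) :
    ((p+1-k:ℕ):ℚ) * (((p+1).choose k:ℕ):ℚ) = ((p:ℚ)+1) * ((p.choose k:ℕ):ℚ) := by
  have h1 := Nat.choose_succ_right_eq (p+1) k
  have h2 := Nat.add_one_mul_choose_eq p k
  have hnat : (p+1-k) * (p+1).choose k = (p+1) * p.choose k := by
    rw [mul_comm, ← h1]
    exact h2.symm
  exact_mod_cast congrArg (Nat.cast : ℕ → ℚ) hnat

lemma H_natpow (n p k : ℕ) (hk : k ≤ p) :
    H n ((k:ℤ) - p) = ∑ i ∈ range n, ((i:ℚ)+1)^(p-k) := by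
  unfold H
  refine sum_congr rfl fun i _ => ?_
  rw [show -((k:ℤ) - p) = ((p - k : ℕ) : ℤ) by push_cast [Nat.cast_sub hk]; ring, zpow_natCast]

lemma pointwise (n p j : ℕ) (hj : j < n) :
    H n (-(p:ℤ)) + (if p = 0 then (1:ℚ) else 0)
      + (1/((p:ℚ)+1)) * ∑ k ∈ Icc 1 (p+1),
          (-1:ℚ)^k * (((p+1).choose k : ℕ) : ℚ)
            * (bernoulli' (p+1-k) + ((p+1-k : ℕ):ℚ) * H n ((k:ℤ) - p)) * ((j:ℚ)+1)^k
      = ∑ k ∈ range (n - j), (k:ℚ)^p := by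
  have hq : ((p:ℚ)+1) ≠ 0 := by positivity
  -- split the Icc sum into the bernoulli' part and the H part
  have hsplit : ∑ k ∈ Icc 1 (p+1),
          (-1:ℚ)^k * (((p+1).choose k : ℕ) : ℚ)
            * (bernoulli' (p+1-k) + ((p+1-k : ℕ):ℚ) * H n ((k:ℤ) - p)) * ((j:ℚ)+1)^k
      = (∑ k ∈ Icc 1 (p+1), (-1:ℚ)^k * (((p+1).choose k:ℕ):ℚ) * bernoulli' (p+1-k) * ((j:ℚ)+1)^k)
        + ((p:ℚ)+1) * ∑ k ∈ Icc 1 (p+1),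
            (-1:ℚ)^k * ((p.choose k:ℕ):ℚ) * H n ((k:ℤ) - p) * ((j:ℚ)+1)^k := by
    rw [Finset.mul_sum, ← Finset.sum_add_distrib]
    refine sum_congr rfl fun k _ => ?_
    have hc := choose_cast p k
    linear_combination ((-1:ℚ)^k * H n ((k:ℤ) - p) * ((j:ℚ)+1)^k) * hc
  have hSD : H n (-(p:ℤ)) + ∑ k ∈ Icc 1 (p+1),
        (-1:ℚ)^k * ((p.choose k:ℕ):ℚ) * H n ((k:ℤ) - p) * ((j:ℚ)+1)^k
      = ∑ i ∈ range n, (((i:ℚ)+1) - ((j:ℚ)+1))^p := by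
    have h0 := Finset.sum_Icc_succ_top (show 1 ≤ p + 1 by omega)
      (fun k => (-1:ℚ)^k * ((p.choose k:ℕ):ℚ) * H n ((k:ℤ) - p) * ((j:ℚ)+1)^k)
    have hgp1 : (-1:ℚ)^(p+1) * ((p.choose (p+1):ℕ):ℚ) * H n (((p+1:ℕ):ℤ) - p) * ((j:ℚ)+1)^(p+1)
        = 0 := by
      simp [Nat.choose_succ_self]
    have hrange : ∑ k ∈ range (p+1),
          (-1:ℚ)^k * ((p.choose k:ℕ):ℚ) * H n ((k:ℤ) - p) * ((j:ℚ)+1)^k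
        = (-1:ℚ)^0 * ((p.choose 0:ℕ):ℚ) * H n (((0:ℕ):ℤ) - p) * ((j:ℚ)+1)^0
          + ∑ k ∈ Icc 1 p,
              (-1:ℚ)^k * ((p.choose k:ℕ):ℚ) * H n ((k:ℤ) - p) * ((j:ℚ)+1)^k := by
      rw [range_eq_Ico, Finset.sum_eq_sum_Ico_succ_bot (Nat.succ_pos p), Nat.succ_eq_add_one, zero_add, Finset.Ico_add_one_right_eq_Icc]
    have hg0 : (-1:ℚ)^0 * ((p.choose 0:ℕ):ℚ) * H n (((0:ℕ):ℤ) - p) * ((j:ℚ)+1)^0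
        = H n (-(p:ℤ)) := by
      norm_num
    rw [h0, hgp1, add_zero, ← hg0, ← hrange]
    rw [Finset.sum_congr rfl (fun k hk => by
      rw [H_natpow n p k (by rw [mem_range] at hk; omega)])]
    exact claimB p n ((j:ℚ)+1)
  rw [hsplit, claimA p j]
  have hcollapse : (1/((p:ℚ)+1)) * (((p:ℚ)+1) * ((-1:ℚ)^(p+1) * ∑ t ∈ range (j+1), (t:ℚ)^p)
        + ((p:ℚ)+1) * ∑ k ∈ Icc 1 (p+1),
            (-1:ℚ)^k * ((p.choose k:ℕ):ℚ) * H n ((k:ℤ) - p) * ((j:ℚ)+1)^k)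
      = (-1:ℚ)^(p+1) * ∑ t ∈ range (j+1), (t:ℚ)^p
        + ∑ k ∈ Icc 1 (p+1),
            (-1:ℚ)^k * ((p.choose k:ℕ):ℚ) * H n ((k:ℤ) - p) * ((j:ℚ)+1)^k := by
    field_simp
  rw [hcollapse]
  have hC := claimC p n j hj
  linear_combination hSD + hC

theorem sum_pow_mul_harmonic_rev (n : ℕ) (m : ℤ) (p : ℕ) :
    ∑ k ∈ Finset.range (n + 1), (k : ℚ) ^ p * H (n - k) m
      = H n (-(p : ℤ)) * H n m + (if p = 0 then H n m else 0)
        + (1 / ((p : ℚ) + 1)) * ∑ k ∈ Finset.Icc 1 (p + 1),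
            (-1 : ℚ) ^ k * ((p + 1).choose k : ℚ)
              * (bernoulli' (p + 1 - k) + ((p + 1 - k : ℕ) : ℚ) * H n ((k : ℤ) - p))
              * H n (m - k) := by
  have hx : ∀ j : ℕ, ((j:ℚ)+1) ≠ 0 := fun j => by positivity
  have hL : (∑ k ∈ Finset.range (n + 1), (k : ℚ) ^ p * H (n - k) m)
      = ∑ j ∈ Finset.range n, ((j:ℚ)+1)^(-m) * ∑ k ∈ Finset.range (n - j), (k:ℚ)^p := by
    have hmem : ∀ (k j : ℕ),
        k ∈ range (n+1) ∧ j ∈ range (n-k) ↔ k ∈ range (n-j) ∧ j ∈ range n := by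
      intro k j; simp only [mem_range]; omega
    calc ∑ k ∈ range (n+1), (k:ℚ)^p * H (n-k) m
        = ∑ k ∈ range (n+1), ∑ j ∈ range (n-k), (k:ℚ)^p * ((j:ℚ)+1)^(-m) := by
          refine sum_congr rfl fun k _ => ?_
          unfold H
          rw [Finset.mul_sum]
      _ = ∑ j ∈ range n, ∑ k ∈ range (n-j), (k:ℚ)^p * ((j:ℚ)+1)^(-m) :=
          Finset.sum_comm' hmem
      _ = ∑ j ∈ range n, ((j:ℚ)+1)^(-m) * ∑ k ∈ range (n-j), (k:ℚ)^p := by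
          refine sum_congr rfl fun j _ => ?_
          rw [← Finset.sum_mul, mul_comm]
  have hR : ∑ j ∈ range n, ((j:ℚ)+1)^(-m) *
        (H n (-(p:ℤ)) + (if p = 0 then (1:ℚ) else 0)
          + (1/((p:ℚ)+1)) * ∑ k ∈ Icc 1 (p+1),
              (-1:ℚ)^k * (((p+1).choose k:ℕ):ℚ)
                * (bernoulli' (p+1-k) + ((p+1-k:ℕ):ℚ) * H n ((k:ℤ)-p)) * ((j:ℚ)+1)^k)
      = H n (-(p : ℤ)) * H n m + (if p = 0 then H n m else 0)
        + (1 / ((p : ℚ) + 1)) * ∑ k ∈ Finset.Icc 1 (p + 1),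
            (-1 : ℚ) ^ k * ((p + 1).choose k : ℚ)
              * (bernoulli' (p + 1 - k) + ((p + 1 - k : ℕ) : ℚ) * H n ((k : ℤ) - p))
              * H n (m - k) := by
    have hHmk : ∀ k : ℕ, H n (m - k) = ∑ j ∈ range n, ((j:ℚ)+1)^(k:ℕ) * ((j:ℚ)+1)^(-m) := by
      intro k
      unfold H
      refine sum_congr rfl fun j _ => ?_
      rw [show -(m - (k:ℤ)) = (k:ℤ) + (-m) by ring, zpow_add₀ (hx j), zpow_natCast]
    have h1 : ∑ j ∈ range n, ((j:ℚ)+1)^(-m) * H n (-(p:ℤ)) = H n (-(p:ℤ)) * H n m := by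
      rw [← Finset.sum_mul, mul_comm]
      rfl
    have h2 : ∑ j ∈ range n, ((j:ℚ)+1)^(-m) * (if p = 0 then (1:ℚ) else 0)
        = (if p = 0 then H n m else 0) := by
      by_cases hp : p = 0
      · simp only [hp, if_pos, mul_one]
        rfl
      · simp [hp]
    have key : ∑ k ∈ Icc 1 (p+1),
            (-1 : ℚ) ^ k * ((p + 1).choose k : ℚ)
              * (bernoulli' (p + 1 - k) + ((p + 1 - k : ℕ) : ℚ) * H n ((k : ℤ) - p))
              * H n (m - k)
          = ∑ j ∈ range n, (∑ k ∈ Icc 1 (p+1),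
              (-1 : ℚ) ^ k * ((p + 1).choose k : ℚ)
                * (bernoulli' (p + 1 - k) + ((p + 1 - k : ℕ) : ℚ) * H n ((k : ℤ) - p))
                * ((j:ℚ)+1)^k) * (((j:ℚ)+1)^(-m)) := by
        calc ∑ k ∈ Icc 1 (p+1),
              (-1 : ℚ) ^ k * ((p + 1).choose k : ℚ)
                * (bernoulli' (p + 1 - k) + ((p + 1 - k : ℕ) : ℚ) * H n ((k : ℤ) - p))
                * H n (m - k)
            = ∑ k ∈ Icc 1 (p+1), ∑ j ∈ range n,
                (-1 : ℚ) ^ k * ((p + 1).choose k : ℚ)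
                  * (bernoulli' (p + 1 - k) + ((p + 1 - k : ℕ) : ℚ) * H n ((k : ℤ) - p))
                  * (((j:ℚ)+1)^(k:ℕ) * ((j:ℚ)+1)^(-m)) := by
              refine sum_congr rfl fun k _ => ?_
              rw [hHmk k, Finset.mul_sum]
          _ = ∑ j ∈ range n, ∑ k ∈ Icc 1 (p+1),
                (-1 : ℚ) ^ k * ((p + 1).choose k : ℚ)
                  * (bernoulli' (p + 1 - k) + ((p + 1 - k : ℕ) : ℚ) * H n ((k : ℤ) - p))
                  * (((j:ℚ)+1)^(k:ℕ) * ((j:ℚ)+1)^(-m)) := Finset.sum_comm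
          _ = ∑ j ∈ range n, (∑ k ∈ Icc 1 (p+1),
                (-1 : ℚ) ^ k * ((p + 1).choose k : ℚ)
                  * (bernoulli' (p + 1 - k) + ((p + 1 - k : ℕ) : ℚ) * H n ((k : ℤ) - p))
                  * ((j:ℚ)+1)^k) * (((j:ℚ)+1)^(-m)) := by
              refine sum_congr rfl fun j _ => ?_
              rw [Finset.sum_mul]
              exact sum_congr rfl fun k _ => by ring
    have h3 : ∑ j ∈ range n, ((j:ℚ)+1)^(-m) *
          ((1/((p:ℚ)+1)) * ∑ k ∈ Icc 1 (p+1),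
            (-1:ℚ)^k * (((p+1).choose k:ℕ):ℚ)
              * (bernoulli' (p+1-k) + ((p+1-k:ℕ):ℚ) * H n ((k:ℤ)-p)) * ((j:ℚ)+1)^k)
        = (1 / ((p : ℚ) + 1)) * ∑ k ∈ Finset.Icc 1 (p + 1),
            (-1 : ℚ) ^ k * ((p + 1).choose k : ℚ)
              * (bernoulli' (p + 1 - k) + ((p + 1 - k : ℕ) : ℚ) * H n ((k : ℤ) - p))
              * H n (m - k) := by
      rw [key, Finset.mul_sum]
      refine sum_congr rfl fun j _ => by ring
    calc ∑ j ∈ range n, ((j:ℚ)+1)^(-m) *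
          (H n (-(p:ℤ)) + (if p = 0 then (1:ℚ) else 0)
            + (1/((p:ℚ)+1)) * ∑ k ∈ Icc 1 (p+1),
                (-1:ℚ)^k * (((p+1).choose k:ℕ):ℚ)
                  * (bernoulli' (p+1-k) + ((p+1-k:ℕ):ℚ) * H n ((k:ℤ)-p)) * ((j:ℚ)+1)^k)
        = ∑ j ∈ range n,
            (((j:ℚ)+1)^(-m) * H n (-(p:ℤ))
              + ((j:ℚ)+1)^(-m) * (if p = 0 then (1:ℚ) else 0)
              + ((j:ℚ)+1)^(-m) * ((1/((p:ℚ)+1)) * ∑ k ∈ Icc 1 (p+1),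
                  (-1:ℚ)^k * (((p+1).choose k:ℕ):ℚ)
                    * (bernoulli' (p+1-k) + ((p+1-k:ℕ):ℚ) * H n ((k:ℤ)-p)) * ((j:ℚ)+1)^k)) :=
          Finset.sum_congr rfl (fun j _ => by ring)
      _ = (∑ j ∈ range n, ((j:ℚ)+1)^(-m) * H n (-(p:ℤ)))
            + (∑ j ∈ range n, ((j:ℚ)+1)^(-m) * (if p = 0 then (1:ℚ) else 0))
            + ∑ j ∈ range n, ((j:ℚ)+1)^(-m) * ((1/((p:ℚ)+1)) * ∑ k ∈ Icc 1 (p+1),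
                (-1:ℚ)^k * (((p+1).choose k:ℕ):ℚ)
                  * (bernoulli' (p+1-k) + ((p+1-k:ℕ):ℚ) * H n ((k:ℤ)-p)) * ((j:ℚ)+1)^k) := by
          simp only [Finset.sum_add_distrib]
      _ = _ := by rw [h1, h2, h3]
  rw [hL, ← hR]
  refine Finset.sum_congr rfl fun j hj => ?_
  rw [mem_range] at hj
  rw [pointwise n p j hj]
end

section
/- For every nonnegative integer n, Σ_{k=0}^n k^2 H_{n−k} = (n(n+1)(2n+1)/6) H_{n+1} − n(n+1)(22n+5)/36. -/
lemma H1_eq (n : ℕ) : H n 1 = ∑ k ∈ Finset.range n, 1 / ((k : ℚ) + 1) := by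
  simp [H, one_div]

lemma H1_succ (n : ℕ) : H (n + 1) 1 = H n 1 + 1 / ((n : ℚ) + 1) := by
  simp [H1_eq, Finset.sum_range_succ]

lemma sum_lin (n : ℕ) : ∑ j ∈ Finset.range n, ((j : ℚ) + 1) = (n : ℚ) * ((n : ℚ) + 1) / 2 := by
  induction n with
  | zero => simp
  | succ m ih => rw [Finset.sum_range_succ, ih]; push_cast; ring

lemma key (n : ℕ) :
    ∑ k ∈ Finset.range (n + 1), (k : ℚ) ^ 2 / ((n : ℚ) + 1 - (k : ℚ))
      = ((n : ℚ) + 1) ^ 2 * H (n + 1) 1 - 2 * ((n : ℚ) + 1) * ((n : ℚ) + 1)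
        + ((n : ℚ) + 1) * ((n : ℚ) + 2) / 2 := by
  have hrefl := Finset.sum_range_reflect (fun k => (k : ℚ) ^ 2 / ((n : ℚ) + 1 - (k : ℚ))) (n + 1)
  rw [← hrefl]
  have h1 : ∑ j ∈ Finset.range (n + 1), ((n + 1 - 1 - j : ℕ) : ℚ) ^ 2 / ((n : ℚ) + 1 - ((n + 1 - 1 - j : ℕ) : ℚ))
      = ∑ j ∈ Finset.range (n + 1), (((n : ℚ) + 1) ^ 2 * (1 / ((j : ℚ) + 1)) - 2 * ((n : ℚ) + 1) + ((j : ℚ) + 1)) := by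
    apply Finset.sum_congr rfl
    intro j hj
    have hjn : j ≤ n := Nat.lt_succ_iff.mp (Finset.mem_range.mp hj)
    have hc : ((n + 1 - 1 - j : ℕ) : ℚ) = (n : ℚ) - (j : ℚ) := by
      simp only [Nat.add_sub_cancel]
      push_cast [Nat.cast_sub hjn]
      ring
    rw [hc]
    have hx : (j : ℚ) + 1 ≠ 0 := by positivity
    have : (n : ℚ) + 1 - ((n : ℚ) - (j : ℚ)) = (j : ℚ) + 1 := by ring
    rw [this]
    field_simp
    ring
  rw [h1, Finset.sum_add_distrib, Finset.sum_sub_distrib, ← Finset.mul_sum, ← H1_eq, sum_lin,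
    Finset.sum_const, Finset.card_range]
  push_cast
  ring

theorem sum_k2_harmonic_rev (n : ℕ) :
    ∑ k ∈ Finset.range (n + 1), (k : ℚ) ^ 2 * H (n - k) 1
      = ((n : ℚ) * ((n : ℚ) + 1) * (2 * (n : ℚ) + 1) / 6) * H (n + 1) 1
        - (n : ℚ) * ((n : ℚ) + 1) * (22 * (n : ℚ) + 5) / 36 := by
  induction n with
  | zero => simp [H]
  | succ m ih =>
    have hstep : ∑ k ∈ Finset.range (m + 1 + 1), (k : ℚ) ^ 2 * H (m + 1 - k) 1
        = (∑ k ∈ Finset.range (m + 1), (k : ℚ) ^ 2 * H (m - k) 1)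
          + ∑ k ∈ Finset.range (m + 1), (k : ℚ) ^ 2 / ((m : ℚ) + 1 - (k : ℚ)) := by
      rw [Finset.sum_range_succ]
      have h0 : H (m + 1 - (m + 1)) 1 = 0 := by simp [H]
      rw [h0, mul_zero, add_zero, ← Finset.sum_add_distrib]
      apply Finset.sum_congr rfl
      intro k hk
      have hkm : k ≤ m := Nat.lt_succ_iff.mp (Finset.mem_range.mp hk)
      have : m + 1 - k = (m - k) + 1 := by omega
      rw [this, H1_succ]
      have hc : ((m - k : ℕ) : ℚ) = (m : ℚ) - (k : ℚ) := Nat.cast_sub hkm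
      rw [hc]
      have : (m : ℚ) - (k : ℚ) + 1 = (m : ℚ) + 1 - (k : ℚ) := by ring
      rw [this]
      ring
    rw [hstep, ih, key]
    have hs2 : H (m + 1 + 1) 1 = H (m + 1) 1 + 1 / ((m : ℚ) + 1 + 1) := by
      rw [H1_succ]; push_cast; ring_nf
    rw [hs2]
    push_cast
    have hx : (m : ℚ) + 2 ≠ 0 := by positivity
    field_simp
    ring
end

section
/- For every nonnegative integer n, Σ_{k=0}^n k H_{n−k}^{(2)} = (n(n+1)/2) H_{n+1}^{(2)} − ((2n+1)/2) H_{n+1} + (n+1)/2. -/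
lemma Hsucc (n : ℕ) (m : ℤ) : H (n + 1) m = H n m + ((n : ℚ) + 1) ^ (-m) := by
  simp [H, Finset.sum_range_succ]

lemma Hval2 (q : ℚ) : q ^ (-(2:ℤ)) = 1 / (q^2) := by
  rw [zpow_neg, one_div, show ((2:ℤ)) = ((2:ℕ):ℤ) from rfl, zpow_natCast]

lemma Hval1 (q : ℚ) : q ^ (-(1:ℤ)) = 1 / q := by
  rw [zpow_neg, one_div]
  norm_num

lemma cast_ne (n : ℕ) : ((n:ℚ)+1) ≠ 0 := by positivity

lemma sumH2 (n : ℕ) : ∑ k ∈ Finset.range (n+1), H k 2 = ((n:ℚ)+1) * H (n+1) 2 - H (n+1) 1 := by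
  induction n with
  | zero => simp [H, Finset.sum_range_succ, Hval2, Hval1]
  | succ n ih =>
      rw [Finset.sum_range_succ, ih, Hsucc (n+1) 2, Hsucc (n+1) 1]
      push_cast
      rw [Hval2, Hval1]
      have h := cast_ne (n+1)
      push_cast at h
      field_simp
      ring

lemma main' (n : ℕ) :
    ∑ k ∈ Finset.range (n+1), ((n:ℚ) - (k:ℚ)) * H k 2
      = ((n : ℚ) * ((n : ℚ) + 1) / 2) * H (n + 1) 2
        - ((2 * (n : ℚ) + 1) / 2) * H (n + 1) 1 + ((n : ℚ) + 1) / 2 := by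
  induction n with
  | zero => simp [H, Finset.sum_range_succ, Hval2, Hval1]
  | succ n ih =>
      have expand : ∑ k ∈ Finset.range (n+2), (((n:ℚ)+1) - (k:ℚ)) * H k 2
          = (∑ k ∈ Finset.range (n+1), ((n:ℚ) - (k:ℚ)) * H k 2)
            + ∑ k ∈ Finset.range (n+1), H k 2 := by
        rw [Finset.sum_range_succ, ← Finset.sum_add_distrib]
        have h0 : (((n:ℚ)+1) - (((n+1:ℕ)):ℚ)) * H (n+1) 2 = 0 := by push_cast; ring
        rw [h0, add_zero]
        exact Finset.sum_congr rfl (fun k _ => by ring)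
      push_cast
      rw [expand, ih, sumH2, Hsucc (n+1) 2, Hsucc (n+1) 1]
      push_cast
      rw [Hval2, Hval1]
      have h := cast_ne (n+1)
      push_cast at h
      field_simp
      ring

theorem sum_k_harmonic2_rev (n : ℕ) :
    ∑ k ∈ Finset.range (n + 1), (k : ℚ) * H (n - k) 2
      = ((n : ℚ) * ((n : ℚ) + 1) / 2) * H (n + 1) 2
        - ((2 * (n : ℚ) + 1) / 2) * H (n + 1) 1 + ((n : ℚ) + 1) / 2 := by
  have hrefl := Finset.sum_range_reflect (fun k => (k:ℚ) * H (n - k) 2) (n+1)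
  simp only [Nat.add_sub_cancel] at hrefl
  rw [← hrefl]
  have congr1 : ∑ j ∈ Finset.range (n+1), ((n - j : ℕ) : ℚ) * H (n - (n - j)) 2
      = ∑ j ∈ Finset.range (n+1), ((n:ℚ) - (j:ℚ)) * H j 2 := by
    apply Finset.sum_congr rfl
    intro j hj
    have hjn : j ≤ n := Nat.lt_succ_iff.mp (Finset.mem_range.mp hj)
    rw [Nat.sub_sub_self hjn, Nat.cast_sub hjn]
  rw [congr1]
  exact main' n
end
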